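/- (Robust constraint satisfaction of the SLS inner approximation.) Suppose the family (Φ̃x^{t,i}, Φ̃u^{t,i}, σ_0,…,σ_{T−1}) is feasible for the tightened SLS problem at (T, ξ). Arrange the blocks into block-lower-triangular matrices Φ̃x ∈ ℝ^{(T+1)n_x×(T+1)n_x} and Φ̃u ∈ ℝ^{(T+1)n_u×(T+1)n_x} whose block in row t, column c is Φ̃x^{t,t−c} (resp. Φ̃u^{t,t−c}) for c ≤ t and zero for c > t. Then Φ̃x is invertible; let K := Φ̃uΦ̃x^{−1}, with blocks K^{t,t−c} in row t, column c. For every Δ_A ∈ ℝ^{n_x×n_x} with ‖Δ_A‖_{∞→∞} ≤ ε_A, every Δ_B ∈ ℝ^{n_x×n_u} with ‖Δ_B‖_{∞→∞} ≤ ε_B, and every disturbance sequence w_0,…,w_{T−1} ∈ ℝ^{n_x} with ‖w_t‖_∞ ≤ σ_w, the trajectory defined by x_0 = ξ, u_t = Σ_{i=0}^{t} K^{t,t−i}x_i, x_{t+1} = (Â + Δ_A)x_t + (B̂ + Δ_B)u_t + w_t satisfies F_x x_t ≤ b_x and F_u u_t ≤ b_u for all 0 ≤ t ≤ T−1, and F_T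 x_T ≤ b_T. -/

import Mathlib

open Matrix Finset

open Fin.NatCast

noncomputable section

/-- The ℓ¹ norm of a vector in `ℝⁿ`: `‖v‖₁ = ∑ i, |v i|`.
(The ℓ∞ norm is the default norm `‖·‖` on `Fin n → ℝ`.) -/
def norm1 {n : ℕ} (v : Fin n → ℝ) : ℝ := ∑ i, |v i|

/-- The operator norm `‖M‖_{∞→∞}` induced by the sup norm, i.e. the maximum
absolute row sum. -/
def opInf {n m : ℕ} (M : Matrix (Fin n) (Fin m) ℝ) : ℝ := ⨆ i, ∑ j, |M i j|

/-- Feasibility of a family `(Φ̃x^{t,i}, Φ̃u^{t,i}, σ₀, …, σ_{T−1})` for the tightened SLS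
problem at horizon `T` and initial state `ξ`:
(a) the SLS affine constraints, (b) the lumped-disturbance norm-bound constraints, and
(c) the tightened state, input, and terminal constraints. -/
structure SLSFeasible {nx nu px pu pT : ℕ}
    (Ahat : Matrix (Fin nx) (Fin nx) ℝ) (Bhat : Matrix (Fin nx) (Fin nu) ℝ)
    (εA εB σw : ℝ)
    (Fx : Matrix (Fin px) (Fin nx) ℝ) (bx : Fin px → ℝ)
    (Fu : Matrix (Fin pu) (Fin nu) ℝ) (bu : Fin pu → ℝ)
    (FT : Matrix (Fin pT) (Fin nx) ℝ) (bT : Fin pT → ℝ)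
    (T : ℕ) (ξ : Fin nx → ℝ)
    (Phix : ℕ → ℕ → Matrix (Fin nx) (Fin nx) ℝ)
    (Phiu : ℕ → ℕ → Matrix (Fin nu) (Fin nx) ℝ)
    (σ : ℕ → ℝ) : Prop where
  sigma_pos : ∀ t < T, 0 < σ t
  phix_zero : Phix 0 0 = 1
  phix_rec_zero : ∀ t < T, Phix (t + 1) 0 = σ t • (1 : Matrix (Fin nx) (Fin nx) ℝ)
  phix_rec : ∀ t < T, ∀ j, 1 ≤ j → j ≤ t + 1 →
    Phix (t + 1) j = Ahat * Phix t (j - 1) + Bhat * Phiu t (j - 1)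
  bound_zero : εA * ‖(Phix 0 0).mulVec ξ‖ + εB * ‖(Phiu 0 0).mulVec ξ‖ + σw ≤ σ 0
  bound_succ : ∀ t, 1 ≤ t → t < T →
    εA * (‖(Phix t t).mulVec ξ‖ + ∑ i ∈ Icc 1 t, opInf (Phix t (t - i))) +
      εB * (‖(Phiu t t).mulVec ξ‖ + ∑ i ∈ Icc 1 t, opInf (Phiu t (t - i))) + σw ≤ σ t
  state_tight : ∀ (i : Fin px), ∀ t < T,
    Fx i ⬝ᵥ (Phix t t).mulVec ξ +
      ∑ k ∈ Icc 1 t, norm1 ((Phix t (t - k))ᵀ.mulVec (Fx i)) ≤ bx i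
  input_tight : ∀ (i : Fin pu), ∀ t < T,
    Fu i ⬝ᵥ (Phiu t t).mulVec ξ +
      ∑ k ∈ Icc 1 t, norm1 ((Phiu t (t - k))ᵀ.mulVec (Fu i)) ≤ bu i
  terminal_tight : ∀ (i : Fin pT),
    FT i ⬝ᵥ (Phix T T).mulVec ξ +
      ∑ k ∈ Icc 1 T, norm1 ((Phix T (T - k))ᵀ.mulVec (FT i)) ≤ bT i

/-- Arrange a family of blocks `P t i` into a block-lower-triangular matrix whose block in
row `t`, column `c` is `P t (t - c)` for `c ≤ t`, and zero for `c > t`. -/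
def bigBlock {n m : ℕ} (T : ℕ) (P : ℕ → ℕ → Matrix (Fin n) (Fin m) ℝ) :
    Matrix (Fin (T + 1) × Fin n) (Fin (T + 1) × Fin m) ℝ :=
  Matrix.of fun i j =>
    if (j.1 : ℕ) ≤ (i.1 : ℕ) then P (i.1 : ℕ) ((i.1 : ℕ) - (j.1 : ℕ)) i.2 j.2 else 0

lemma opInf_nonneg {n m : ℕ} (M : Matrix (Fin n) (Fin m) ℝ) : 0 ≤ opInf M := by
  rcases isEmpty_or_nonempty (Fin n) with h | h
  · simp [opInf, Real.iSup_of_isEmpty]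
  · exact le_ciSup_of_le (Set.Finite.bddAbove (Set.finite_range _))
      (Classical.arbitrary _) (Finset.sum_nonneg fun j _ => abs_nonneg _)

lemma row_sum_le_opInf {n m : ℕ} (M : Matrix (Fin n) (Fin m) ℝ) (i : Fin n) :
    ∑ j, |M i j| ≤ opInf M :=
  le_ciSup (f := fun i => ∑ j, |M i j|) (Set.Finite.bddAbove (Set.finite_range _)) i

lemma abs_dot_le {n : ℕ} (v x : Fin n → ℝ) : |v ⬝ᵥ x| ≤ norm1 v * ‖x‖ := by
  rw [dotProduct, norm1, Finset.sum_mul]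
  refine (Finset.abs_sum_le_sum_abs _ _).trans (Finset.sum_le_sum fun j _ => ?_)
  rw [abs_mul]
  exact mul_le_mul_of_nonneg_left
    ((Real.norm_eq_abs _ ▸ norm_le_pi_norm x j)) (abs_nonneg _)

lemma norm_mulVec_le {n m : ℕ} (M : Matrix (Fin n) (Fin m) ℝ) (v : Fin m → ℝ) :
    ‖M.mulVec v‖ ≤ opInf M * ‖v‖ := by
  rw [pi_norm_le_iff_of_nonneg (mul_nonneg (opInf_nonneg M) (norm_nonneg v))]
  intro i
  have h1 : |M i ⬝ᵥ v| ≤ (∑ j, |M i j|) * ‖v‖ := by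
    rw [dotProduct, Finset.sum_mul]
    refine (Finset.abs_sum_le_sum_abs _ _).trans (Finset.sum_le_sum fun j _ => ?_)
    rw [abs_mul]
    exact mul_le_mul_of_nonneg_left ((Real.norm_eq_abs _ ▸ norm_le_pi_norm v j)) (abs_nonneg _)
  calc ‖M.mulVec v i‖ = |M i ⬝ᵥ v| := by rw [Real.norm_eq_abs]; rfl
    _ ≤ (∑ j, |M i j|) * ‖v‖ := h1
    _ ≤ opInf M * ‖v‖ := mul_le_mul_of_nonneg_right (row_sum_le_opInf M i) (norm_nonneg v)

lemma bigBlock_tri {n : ℕ} (T : ℕ) (P : ℕ → ℕ → Matrix (Fin n) (Fin n) ℝ) :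
    (bigBlock T P).BlockTriangular (OrderDual.toDual ∘ Prod.fst) := by
  intro i j hij
  have : ¬ ((j.1 : ℕ) ≤ (i.1 : ℕ)) := by
    simp only [Function.comp, OrderDual.toDual_lt_toDual] at hij
    exact not_le.mpr hij
  simp only [bigBlock, of_apply]
  rw [if_neg this]

lemma bigBlock_det_isUnit (nx T : ℕ) (σ : ℕ → ℝ) (hσ : ∀ t < T, 0 < σ t)
    (Phix : ℕ → ℕ → Matrix (Fin nx) (Fin nx) ℝ)
    (h0 : Phix 0 0 = 1) (hs : ∀ t < T, Phix (t+1) 0 = σ t • (1 : Matrix (Fin nx) (Fin nx) ℝ)) :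
    IsUnit (bigBlock T Phix).det := by
  set d : ℕ → ℝ := fun t => if t = 0 then 1 else σ (t - 1) with hd
  have hPhi0 : ∀ t ≤ T, Phix t 0 = d t • (1 : Matrix (Fin nx) (Fin nx) ℝ) := by
    intro t ht
    cases t with
    | zero => simp [hd, h0]
    | succ s => simp [hd, hs s (by omega)]
  have hdne : ∀ t ≤ T, d t ≠ 0 := by
    intro t ht
    cases t with
    | zero => simp [hd]
    | succ s => simpa [hd] using (hσ s (by omega)).ne'
  rw [isUnit_iff_ne_zero, (bigBlock_tri T Phix).det]
  refine Finset.prod_ne_zero_iff.mpr fun a _ => ?_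
  set t : ℕ := ((OrderDual.ofDual a : Fin (T+1)) : ℕ) with hta
  have htT : t ≤ T := by
    have := (OrderDual.ofDual a : Fin (T+1)).isLt
    omega
  have hsq : (bigBlock T Phix).toSquareBlock (OrderDual.toDual ∘ Prod.fst) a =
      d t • (1 : Matrix _ _ ℝ) := by
    ext p q
    obtain ⟨p, hp⟩ := p
    obtain ⟨q, hq⟩ := q
    have hp1 : p.1 = OrderDual.ofDual a := hp
    have hq1 : q.1 = OrderDual.ofDual a := hq
    have hcond : (q.1 : ℕ) ≤ (p.1 : ℕ) := by rw [hp1, hq1]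
    simp only [Matrix.toSquareBlock_def, bigBlock, of_apply, hcond, if_true,
      Matrix.smul_apply, Matrix.one_apply, smul_eq_mul]
    rw [hp1, hq1, Nat.sub_self]
    rw [hPhi0 t htT]
    have hpq : (⟨p, hp⟩ : {i // (OrderDual.toDual ∘ Prod.fst) i = a}) = ⟨q, hq⟩ ↔ p.2 = q.2 := by
      rw [Subtype.mk_eq_mk]
      constructor
      · intro h; rw [h]
      · intro h; exact Prod.ext (hp1.trans hq1.symm) h
    simp only [Matrix.smul_apply, Matrix.one_apply, smul_eq_mul, hpq, hta]
  rw [hsq, Matrix.det_smul, Matrix.det_one, mul_one]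
  exact pow_ne_zero _ (hdne t htT)

lemma filter_range_le (T t : ℕ) (h : t ≤ T) :
    (Finset.range (T+1)).filter (fun c => c ≤ t) = Finset.range (t+1) := by
  ext c; simp; omega

lemma sum_triangle {M : Type*} [AddCommMonoid M] (t : ℕ) (F : ℕ → ℕ → M) :
    ∑ i ∈ range (t+1), ∑ c ∈ range (i+1), F i c
      = ∑ c ∈ range (t+1), ∑ i ∈ Icc c t, F i c :=
  Finset.sum_comm' (by intro i c; simp; omega)

lemma blockMulVec {n m : ℕ} (T : ℕ) (P : ℕ → ℕ → Matrix (Fin n) (Fin m) ℝ)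
    (v : ℕ → Fin m → ℝ) (t : ℕ) (ht : t ≤ T) (a : Fin n) :
    (bigBlock T P).mulVec (fun p => v (p.1 : ℕ) p.2) ((t : Fin (T+1)), a)
      = ∑ c ∈ range (t+1), (P t (t - c)).mulVec (v c) a := by
  have htv : ((t : Fin (T+1)) : ℕ) = t := Fin.val_cast_of_lt (by omega)
  rw [Matrix.mulVec, dotProduct, Fintype.sum_prod_type]
  have hrow : ∀ s : Fin (T+1), ∑ b : Fin m,
      bigBlock T P ((t : Fin (T+1)), a) (s, b) * v (s : ℕ) b
      = if (s : ℕ) ≤ t then ((P t (t - (s:ℕ))).mulVec (v (s:ℕ))) a else 0 := by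
    intro s
    by_cases hs : (s : ℕ) ≤ t
    · simp only [bigBlock, of_apply, htv, hs, if_true]
      rfl
    · rw [if_neg hs]
      refine Finset.sum_eq_zero fun b _ => ?_
      simp only [bigBlock, of_apply, htv]
      rw [if_neg hs, zero_mul]
  rw [Finset.sum_congr rfl (fun s _ => hrow s)]
  have := Fin.sum_univ_eq_sum_range
    (fun i => if i ≤ t then ((P t (t - i)).mulVec (v i)) a else 0) (T+1)
  rw [show (∑ s : Fin (T+1), if (s:ℕ) ≤ t then ((P t (t - (s:ℕ))).mulVec (v (s:ℕ))) a else 0)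
      = ∑ i ∈ range (T+1), (if i ≤ t then ((P t (t - i)).mulVec (v i)) a else 0) from this]
  rw [← Finset.sum_filter, filter_range_le T t ht]

lemma Kblock {nx nu : ℕ} (T : ℕ)
    (Phix : ℕ → ℕ → Matrix (Fin nx) (Fin nx) ℝ)
    (Phiu : ℕ → ℕ → Matrix (Fin nu) (Fin nx) ℝ)
    (hdet : IsUnit (bigBlock T Phix).det)
    (t c : ℕ) (hc : c ≤ t) (ht : t ≤ T) :
    ∑ i ∈ Icc c t, (Matrix.of fun (a : Fin nu) (b : Fin nx) =>
        (bigBlock T Phiu * (bigBlock T Phix)⁻¹) ((t : Fin (T+1)), a) ((i : Fin (T+1)), b))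
      * Phix i (i - c) = Phiu t (t - c) := by
  haveI := (bigBlock T Phix).invertibleOfIsUnitDet hdet
  set K := bigBlock T Phiu * (bigBlock T Phix)⁻¹ with hK
  have hBXinv : ((bigBlock T Phix)⁻¹).BlockTriangular (OrderDual.toDual ∘ Prod.fst) :=
    blockTriangular_inv_of_blockTriangular (bigBlock_tri T Phix)
  have hKtri : ∀ (p : Fin (T+1) × Fin nu) (q : Fin (T+1) × Fin nx),
      p.1 < q.1 → K p q = 0 := by
    intro p q hpq
    rw [hK, Matrix.mul_apply]
    refine Finset.sum_eq_zero fun r _ => ?_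
    by_cases hr : r.1 ≤ p.1
    · have hz : (bigBlock T Phix)⁻¹ r q = 0 := by
        apply hBXinv
        simp only [Function.comp, OrderDual.toDual_lt_toDual]
        exact lt_of_le_of_lt hr hpq
      rw [hz, mul_zero]
    · have hz : bigBlock T Phiu p r = 0 := by
        simp only [bigBlock, of_apply]
        exact if_neg (fun h => hr (Fin.le_def.mpr h))
      rw [hz, zero_mul]
  have hKBX : K * bigBlock T Phix = bigBlock T Phiu := by
    rw [hK, Matrix.mul_assoc, Matrix.nonsing_inv_mul _ hdet, Matrix.mul_one]
  have htv : ((t : Fin (T+1)) : ℕ) = t := Fin.val_cast_of_lt (by omega)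
  have hcv : ((c : Fin (T+1)) : ℕ) = c := Fin.val_cast_of_lt (by omega)
  ext a b
  have hRHS : (K * bigBlock T Phix) ((t : Fin (T+1)), a) ((c : Fin (T+1)), b)
      = Phiu t (t - c) a b := by
    rw [hKBX]
    simp only [bigBlock, of_apply, htv, hcv]
    rw [if_pos hc]
  set f : ℕ → ℝ := fun i => ∑ β : Fin nx,
      K ((t : Fin (T+1)), a) ((i : Fin (T+1)), β)
        * bigBlock T Phix ((i : Fin (T+1)), β) ((c : Fin (T+1)), b) with hf
  have hLHS : (∑ i ∈ Icc c t, (Matrix.of fun (a : Fin nu) (b : Fin nx) =>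
        K ((t : Fin (T+1)), a) ((i : Fin (T+1)), b)) * Phix i (i - c)) a b
      = ∑ i ∈ Icc c t, f i := by
    rw [Matrix.sum_apply]
    refine Finset.sum_congr rfl fun i hi => ?_
    rw [Finset.mem_Icc] at hi
    have hiv : ((i : Fin (T+1)) : ℕ) = i := Fin.val_cast_of_lt (by omega)
    rw [Matrix.mul_apply, hf]
    refine Finset.sum_congr rfl fun β _ => ?_
    simp only [of_apply, bigBlock]
    rw [hiv, hcv, if_pos hi.1]
  have hmid : ∑ i ∈ Icc c t, f i = ∑ i ∈ range (T+1), f i := by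
    refine Finset.sum_subset (fun i hi => ?_) (fun i hi hni => ?_)
    · rw [Finset.mem_Icc] at hi
      rw [Finset.mem_range]; omega
    · rw [Finset.mem_range] at hi
      rw [Finset.mem_Icc, not_and_or] at hni
      have hiv : ((i : Fin (T+1)) : ℕ) = i := Fin.val_cast_of_lt (by omega)
      rcases hni with hlt | hgt
      · refine Finset.sum_eq_zero fun β _ => ?_
        have hcond : ¬ (((c : Fin (T+1)) : ℕ) ≤ ((i : Fin (T+1)) : ℕ)) := by
          rw [hiv, hcv]; omega
        simp only [bigBlock, of_apply, if_neg hcond, mul_zero]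
      · refine Finset.sum_eq_zero fun β _ => ?_
        have hz : K ((t : Fin (T+1)), a) ((i : Fin (T+1)), β) = 0 := by
          apply hKtri
          show (t : Fin (T+1)) < (i : Fin (T+1))
          rw [Fin.lt_def, htv, hiv]; omega
        rw [hz, zero_mul]
  have hsum : (K * bigBlock T Phix) ((t : Fin (T+1)), a) ((c : Fin (T+1)), b)
      = ∑ i ∈ range (T+1), f i := by
    rw [Matrix.mul_apply, Fintype.sum_prod_type]
    rw [Finset.sum_congr rfl (fun s _ => show
      (∑ β : Fin nx, K ((t : Fin (T+1)), a) (s, β)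
        * bigBlock T Phix (s, β) ((c : Fin (T+1)), b)) = f (s : ℕ) by
      simp only [hf, Fin.cast_val_eq_self])]
    exact Fin.sum_univ_eq_sum_range f (T+1)
  rw [hLHS, hmid, ← hsum, hRHS]

lemma mulVec_sumv {n m : ℕ} {ι : Type*} (s : Finset ι) (M : Matrix (Fin n) (Fin m) ℝ)
    (v : ι → Fin m → ℝ) : M.mulVec (∑ i ∈ s, v i) = ∑ i ∈ s, M.mulVec (v i) := by
  ext a
  simp only [Matrix.mulVec, dotProduct, Finset.sum_apply, Finset.mul_sum]
  exact Finset.sum_comm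

lemma sumM_mulVec {n m : ℕ} {ι : Type*} (s : Finset ι) (M : ι → Matrix (Fin n) (Fin m) ℝ)
    (v : Fin m → ℝ) : (∑ i ∈ s, M i).mulVec v = ∑ i ∈ s, (M i).mulVec v := by
  ext a
  simp only [Matrix.mulVec, dotProduct, Finset.sum_apply, Matrix.sum_apply, Finset.sum_mul]
  exact Finset.sum_comm

lemma dot_sumv {n : ℕ} {ι : Type*} (s : Finset ι) (v : Fin n → ℝ) (f : ι → Fin n → ℝ) :
    v ⬝ᵥ (∑ i ∈ s, f i) = ∑ i ∈ s, v ⬝ᵥ f i := by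
  simp only [dotProduct, Finset.sum_apply, Finset.mul_sum]
  exact Finset.sum_comm

lemma dot_mulVec_le {n m : ℕ} (v : Fin n → ℝ) (M : Matrix (Fin n) (Fin m) ℝ)
    (w : Fin m → ℝ) (hw : ‖w‖ ≤ 1) : v ⬝ᵥ M.mulVec w ≤ norm1 (Mᵀ.mulVec v) := by
  have h0 : 0 ≤ norm1 (Mᵀ.mulVec v) := Finset.sum_nonneg fun j _ => abs_nonneg _
  calc v ⬝ᵥ M.mulVec w = (Mᵀ.mulVec v) ⬝ᵥ w := by
        rw [Matrix.dotProduct_mulVec, ← Matrix.mulVec_transpose]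
    _ ≤ |(Mᵀ.mulVec v) ⬝ᵥ w| := le_abs_self _
    _ ≤ norm1 (Mᵀ.mulVec v) * ‖w‖ := abs_dot_le _ _
    _ ≤ norm1 (Mᵀ.mulVec v) * 1 := mul_le_mul_of_nonneg_left hw h0
    _ = _ := mul_one _

lemma bound_helper {p q : ℕ} (t : ℕ) (Q : ℕ → Matrix (Fin p) (Fin q) ℝ)
    (v : ℕ → Fin q → ℝ) (hv : ∀ s, 1 ≤ s → s ≤ t → ‖v s‖ ≤ 1) :
    ‖∑ c ∈ range (t+1), (Q c).mulVec (v c)‖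
      ≤ ‖(Q 0).mulVec (v 0)‖ + ∑ i ∈ Icc 1 t, opInf (Q i) := by
  have hr : range (t+1) = insert 0 (Icc 1 t) := by ext c; simp; omega
  rw [hr, Finset.sum_insert (by simp)]
  refine (norm_add_le _ _).trans (add_le_add_right ?_ _)
  refine (norm_sum_le _ _).trans (Finset.sum_le_sum fun i hi => ?_)
  rw [Finset.mem_Icc] at hi
  calc ‖(Q i).mulVec (v i)‖ ≤ opInf (Q i) * ‖v i‖ := norm_mulVec_le _ _
    _ ≤ opInf (Q i) * 1 := mul_le_mul_of_nonneg_left (hv i hi.1 hi.2) (opInf_nonneg _)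
    _ = opInf (Q i) := mul_one _

lemma constr_helper {p q : ℕ} (t : ℕ) (f : Fin p → ℝ) (Q : ℕ → Matrix (Fin p) (Fin q) ℝ)
    (v : ℕ → Fin q → ℝ) (hv : ∀ s, 1 ≤ s → s ≤ t → ‖v s‖ ≤ 1) :
    f ⬝ᵥ (∑ c ∈ range (t+1), (Q c).mulVec (v c))
      ≤ f ⬝ᵥ (Q 0).mulVec (v 0) + ∑ k ∈ Icc 1 t, norm1 ((Q k)ᵀ.mulVec f) := by
  have hr : range (t+1) = insert 0 (Icc 1 t) := by ext c; simp; omega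
  rw [dot_sumv, hr, Finset.sum_insert (by simp)]
  refine add_le_add_right (Finset.sum_le_sum fun k hk => ?_) _
  rw [Finset.mem_Icc] at hk
  exact dot_mulVec_le f (Q k) (v k) (hv k hk.1 hk.2)

theorem statement13 (nx nu px pu pT : ℕ) (hnx : 1 ≤ nx) (hnu : 1 ≤ nu)
    (Ahat : Matrix (Fin nx) (Fin nx) ℝ) (Bhat : Matrix (Fin nx) (Fin nu) ℝ)
    (εA εB σw : ℝ) (hεA : 0 ≤ εA) (hεB : 0 ≤ εB) (hσw : 0 < σw)
    (Fx : Matrix (Fin px) (Fin nx) ℝ) (bx : Fin px → ℝ)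
    (Fu : Matrix (Fin pu) (Fin nu) ℝ) (bu : Fin pu → ℝ)
    (FT : Matrix (Fin pT) (Fin nx) ℝ) (bT : Fin pT → ℝ)
    (T : ℕ) (hT : 1 ≤ T) (ξ : Fin nx → ℝ)
    (Phix : ℕ → ℕ → Matrix (Fin nx) (Fin nx) ℝ)
    (Phiu : ℕ → ℕ → Matrix (Fin nu) (Fin nx) ℝ)
    (σ : ℕ → ℝ)
    (hfeas : SLSFeasible Ahat Bhat εA εB σw Fx bx Fu bu FT bT T ξ Phix Phiu σ) :
    IsUnit (bigBlock T Phix) ∧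
    ∀ (ΔA : Matrix (Fin nx) (Fin nx) ℝ) (ΔB : Matrix (Fin nx) (Fin nu) ℝ)
      (w : ℕ → Fin nx → ℝ),
      opInf ΔA ≤ εA → opInf ΔB ≤ εB → (∀ t < T, ‖w t‖ ≤ σw) →
      ∀ (x : ℕ → Fin nx → ℝ) (u : ℕ → Fin nu → ℝ),
        x 0 = ξ →
        (∀ t < T, u t = ∑ i ∈ Finset.range (t + 1),
          Matrix.mulVec
            (Matrix.of fun (a : Fin nu) (b : Fin nx) =>
              (bigBlock T Phiu * (bigBlock T Phix)⁻¹) (Fin.ofNat (T + 1) t, a)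
                (Fin.ofNat (T + 1) i, b))
            (x i)) →
        (∀ t < T, x (t + 1) = (Ahat + ΔA).mulVec (x t) + (Bhat + ΔB).mulVec (u t) + w t) →
        (∀ t < T, Fx.mulVec (x t) ≤ bx ∧ Fu.mulVec (u t) ≤ bu) ∧
          FT.mulVec (x T) ≤ bT := by
  have hdet : IsUnit (bigBlock T Phix).det :=
    bigBlock_det_isUnit nx T σ hfeas.sigma_pos Phix hfeas.phix_zero hfeas.phix_rec_zero
  refine ⟨(Matrix.isUnit_iff_isUnit_det _).mpr hdet, ?_⟩
  intro ΔA ΔB w hΔA hΔB hw x u hx0 hu hdyn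
  set δ : ℕ → Fin nx → ℝ := fun t => ΔA.mulVec (x t) + ΔB.mulVec (u t) + w t with hδdef
  set wh : ℕ → Fin nx → ℝ := fun t => Nat.casesOn t ξ (fun s => (σ s)⁻¹ • δ s) with hwhdef
  -- the controller reproduces the SLS input maps
  have hQ : ∀ t, t < T →
      (∀ s, s ≤ t → x s = ∑ c ∈ range (s+1), (Phix s (s-c)).mulVec (wh c)) →
      u t = ∑ c ∈ range (t+1), (Phiu t (t-c)).mulVec (wh c) := by
    intro t ht hxs
    rw [hu t ht]
    calc ∑ i ∈ range (t+1), (Matrix.of fun (a : Fin nu) (b : Fin nx) =>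
          (bigBlock T Phiu * (bigBlock T Phix)⁻¹) ((t : Fin (T+1)), a)
            ((i : Fin (T+1)), b)).mulVec (x i)
        = ∑ i ∈ range (t+1), ∑ c ∈ range (i+1),
            ((Matrix.of fun (a : Fin nu) (b : Fin nx) =>
              (bigBlock T Phiu * (bigBlock T Phix)⁻¹) ((t : Fin (T+1)), a)
                ((i : Fin (T+1)), b)) * Phix i (i-c)).mulVec (wh c) := by
          refine Finset.sum_congr rfl fun i hi => ?_
          rw [Finset.mem_range] at hi
          rw [hxs i (by omega), mulVec_sumv]
          exact Finset.sum_congr rfl fun c _ =>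
            Matrix.mulVec_mulVec (wh c)
              (Matrix.of fun (a : Fin nu) (b : Fin nx) =>
                (bigBlock T Phiu * (bigBlock T Phix)⁻¹) ((t : Fin (T+1)), a)
                  ((i : Fin (T+1)), b)) (Phix i (i-c))
      _ = ∑ c ∈ range (t+1), ∑ i ∈ Icc c t,
            ((Matrix.of fun (a : Fin nu) (b : Fin nx) =>
              (bigBlock T Phiu * (bigBlock T Phix)⁻¹) ((t : Fin (T+1)), a)
                ((i : Fin (T+1)), b)) * Phix i (i-c)).mulVec (wh c) :=
          sum_triangle t _
      _ = ∑ c ∈ range (t+1), (Phiu t (t-c)).mulVec (wh c) := by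
          refine Finset.sum_congr rfl fun c hc => ?_
          rw [Finset.mem_range] at hc
          rw [← sumM_mulVec, Kblock T Phix Phiu hdet t c (by omega) (by omega)]
  -- bound on the lumped disturbance
  have hdelta : ∀ t, t < T →
      (∀ s, s ≤ t → x s = ∑ c ∈ range (s+1), (Phix s (s-c)).mulVec (wh c)) →
      (∀ s, 1 ≤ s → s ≤ t → ‖wh s‖ ≤ 1) → ‖δ t‖ ≤ σ t := by
    intro t ht hxs hws
    have hut := hQ t ht hxs
    have hX : ‖x t‖ ≤ ‖(Phix t t).mulVec ξ‖ + ∑ i ∈ Icc 1 t, opInf (Phix t (t-i)) := by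
      rw [hxs t le_rfl]
      exact bound_helper t (fun c => Phix t (t-c)) wh hws
    have hU : ‖u t‖ ≤ ‖(Phiu t t).mulVec ξ‖ + ∑ i ∈ Icc 1 t, opInf (Phiu t (t-i)) := by
      rw [hut]
      exact bound_helper t (fun c => Phiu t (t-c)) wh hws
    have hd1 : ‖δ t‖ ≤ εA * (‖(Phix t t).mulVec ξ‖ + ∑ i ∈ Icc 1 t, opInf (Phix t (t-i)))
        + εB * (‖(Phiu t t).mulVec ξ‖ + ∑ i ∈ Icc 1 t, opInf (Phiu t (t-i))) + σw := by
      refine (norm_add₃_le).trans (add_le_add (add_le_add ?_ ?_) (hw t ht))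
      · exact (norm_mulVec_le ΔA (x t)).trans
          (mul_le_mul hΔA hX (norm_nonneg _) hεA)
      · exact (norm_mulVec_le ΔB (u t)).trans
          (mul_le_mul hΔB hU (norm_nonneg _) hεB)
    refine hd1.trans ?_
    cases t with
    | zero =>
      have h0 : Icc 1 0 = (∅ : Finset ℕ) := by simp
      simpa [h0] using hfeas.bound_zero
    | succ n => exact hfeas.bound_succ (n+1) (by omega) ht
  -- main induction
  have key : ∀ t, t ≤ T →
      (∀ s, s ≤ t → x s = ∑ c ∈ range (s+1), (Phix s (s-c)).mulVec (wh c)) ∧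
      (∀ s, 1 ≤ s → s ≤ t → ‖wh s‖ ≤ 1) := by
    intro t
    induction t with
    | zero =>
      intro _
      refine ⟨?_, fun s h1 h2 => by omega⟩
      intro s hs
      have hs0 : s = 0 := by omega
      subst hs0
      rw [hx0, Finset.sum_range_one, hfeas.phix_zero, Matrix.one_mulVec]
      rfl
    | succ n ih =>
      intro hsT
      obtain ⟨ihx, ihw⟩ := ih (by omega)
      have hnT : n < T := by omega
      have hun := hQ n hnT ihx
      have hdn : ‖δ n‖ ≤ σ n := hdelta n hnT ihx ihw
      have hσn := hfeas.sigma_pos n hnT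
      have hwsucc : ‖wh (n+1)‖ ≤ 1 := by
        show ‖(σ n)⁻¹ • δ n‖ ≤ 1
        rw [norm_smul, Real.norm_eq_abs, abs_of_pos (inv_pos.mpr hσn)]
        calc (σ n)⁻¹ * ‖δ n‖ ≤ (σ n)⁻¹ * σ n :=
              mul_le_mul_of_nonneg_left hdn (le_of_lt (inv_pos.mpr hσn))
          _ = 1 := inv_mul_cancel₀ hσn.ne'
      have hxsucc : x (n+1) = ∑ c ∈ range (n+2), (Phix (n+1) (n+1-c)).mulVec (wh c) := by
        rw [hdyn n hnT]
        have h1 : (Ahat + ΔA).mulVec (x n) + (Bhat + ΔB).mulVec (u n) + w n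
            = Ahat.mulVec (x n) + Bhat.mulVec (u n) + δ n := by
          rw [Matrix.add_mulVec, Matrix.add_mulVec, hδdef]
          ext i; simp only [Pi.add_apply]; ring
        rw [h1, ihx n le_rfl, hun, mulVec_sumv, mulVec_sumv,
          Finset.sum_range_succ (fun c => (Phix (n+1) (n+1-c)).mulVec (wh c)) (n+1)]
        have hlast : (Phix (n+1) (n+1-(n+1))).mulVec (wh (n+1)) = δ n := by
          have he : n+1-(n+1) = 0 := by omega
          rw [he, hfeas.phix_rec_zero n hnT, Matrix.smul_mulVec, Matrix.one_mulVec]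
          show σ n • ((σ n)⁻¹ • δ n) = δ n
          rw [smul_inv_smul₀ hσn.ne']
        rw [hlast, ← Finset.sum_add_distrib]
        congr 1
        refine Finset.sum_congr rfl fun c hc => ?_
        rw [Finset.mem_range] at hc
        have hrec := hfeas.phix_rec n hnT (n+1-c) (by omega) (by omega)
        have he : n+1-c-1 = n-c := by omega
        rw [he] at hrec
        rw [Matrix.mulVec_mulVec, Matrix.mulVec_mulVec, ← Matrix.add_mulVec, ← hrec]
      refine ⟨fun s hs => ?_, fun s h1 h2 => ?_⟩
      · rcases Nat.lt_or_ge s (n+1) with h | h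
        · exact ihx s (by omega)
        · have : s = n+1 := by omega
          subst this
          exact hxsucc
      · rcases Nat.lt_or_ge s (n+1) with h | h
        · exact ihw s h1 (by omega)
        · have : s = n+1 := by omega
          subst this
          exact hwsucc
  obtain ⟨hxall, hwall⟩ := key T le_rfl
  constructor
  · intro t ht
    constructor
    · refine Pi.le_def.mpr fun i => ?_
      show Fx i ⬝ᵥ x t ≤ bx i
      rw [hxall t (le_of_lt ht)]
      refine (constr_helper t (Fx i) (fun c => Phix t (t-c)) wh
        (fun s h1 h2 => hwall s h1 (by omega))).trans ?_
      exact hfeas.state_tight i t ht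
    · refine Pi.le_def.mpr fun i => ?_
      show Fu i ⬝ᵥ u t ≤ bu i
      rw [hQ t ht (fun s hs => hxall s (by omega))]
      refine (constr_helper t (Fu i) (fun c => Phiu t (t-c)) wh
        (fun s h1 h2 => hwall s h1 (by omega))).trans ?_
      exact hfeas.input_tight i t ht
  · refine Pi.le_def.mpr fun i => ?_
    show FT i ⬝ᵥ x T ≤ bT i
    rw [hxall T le_rfl]
    refine (constr_helper T (FT i) (fun c => Phix T (T-c)) wh
      (fun s h1 h2 => hwall s h1 h2)).trans ?_
    exact hfeas.terminal_tight i
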